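/- Let G be a finite connected bipartite graph whose two partition classes differ in size by Δ(G) ≥ 2. Then for every r ≥ 1, the r-th Cartesian power G^r is connected and bipartite, its partition classes differ in size by Δ(G)^r, and any path in G^r omits at least Δ(G)^r - 1 ≥ 2^r - 1 vertices; in particular G^r has no Hamilton path. -/

import Mathlib

/-- The `r`-th Cartesian (box) power of `G`, on vertex set `Fin r → V`:
two vertices are adjacent iff they differ in exactly one coordinate,
and are adjacent in `G` there. -/
def boxPower {V : Type*} (G : SimpleGraph V) (r : ℕ) : SimpleGraph (Fin r → V) where
  Adj f g := ∃ i, G.Adj (f i) (g i) ∧ ∀ j, j ≠ i → f j = g j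
  symm := by
    constructor
    rintro f g ⟨i, hadj, heq⟩
    exact ⟨i, hadj.symm, fun j hj => (heq j hj).symm⟩
  loopless := by
    constructor
    rintro f ⟨i, hadj, -⟩
    exact hadj.ne rfl

/-- `A` is a bipartition class of `G`: every edge goes between `A` and its complement. -/
def IsBipartitionClass {V : Type*} (G : SimpleGraph V) (A : Set V) : Prop :=
  ∀ ⦃u v : V⦄, G.Adj u v → (u ∈ A ↔ v ∉ A)

open Classical in
noncomputable def bpChi {V : Type*} (A : Set V) (v : V) : ℤ := if v ∈ A then -1 else 1

noncomputable def bpEps {V : Type*} (A : Set V) {r : ℕ} (f : Fin r → V) : ℤ :=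
  ∏ i, bpChi A (f i)

lemma bpChi_cases {V : Type*} (A : Set V) (v : V) : bpChi A v = 1 ∨ bpChi A v = -1 := by
  unfold bpChi; split <;> simp

lemma bpEps_cases {V : Type*} (A : Set V) {r : ℕ} (f : Fin r → V) :
    bpEps A f = 1 ∨ bpEps A f = -1 := by
  have : |bpEps A f| = 1 := by
    unfold bpEps
    rw [Finset.abs_prod]
    apply Finset.prod_eq_one
    intro i _
    rcases bpChi_cases A (f i) with h | h <;> simp [h]
  rcases abs_eq (by norm_num : (0:ℤ) ≤ 1) |>.mp this with h | h
  · exact Or.inl h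
  · exact Or.inr h

lemma bpEps_adj {V : Type*} (G : SimpleGraph V) (A : Set V) (hA : IsBipartitionClass G A)
    {r : ℕ} {f g : Fin r → V} (h : (boxPower G r).Adj f g) : bpEps A g = -bpEps A f := by
  obtain ⟨i, hadj, heq⟩ := h
  have hchi : bpChi A (g i) = -bpChi A (f i) := by
    have := hA hadj
    unfold bpChi
    by_cases hf : f i ∈ A
    · rw [if_pos hf, if_neg (this.mp hf)]; ring
    · rw [if_neg hf, if_pos (by by_contra hg; exact hf (this.mpr hg))]
  unfold bpEps
  rw [Fintype.prod_eq_mul_prod_compl i (fun j => bpChi A (g j)),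
      Fintype.prod_eq_mul_prod_compl i (fun j => bpChi A (f j)), hchi]
  rw [Finset.prod_congr rfl (fun j hj => congrArg (bpChi A) (heq j (by simpa using hj)).symm)]
  ring

lemma bpAltSum : ∀ (l : List ℤ), (∀ v ∈ l, v = 1 ∨ v = -1) →
    l.Chain' (fun a b => b = -a) → |l.sum| ≤ 1
  | [], _, _ => by simp
  | [a], h, _ => by rcases h a (by simp) with h | h <;> simp [h]
  | a :: b :: t, h, hc => by
    have hb : b = -a := (List.isChain_cons_cons.mp hc).1
    have hct : t.Chain' (fun a b => b = -a) := ((List.isChain_cons_cons.mp hc).2).tail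
    have ih := bpAltSum t (fun v hv => h v (by simp [hv])) hct
    simpa [hb] using ih

lemma bpReach_update {V : Type*} (G : SimpleGraph V) {r : ℕ} (f : Fin r → V) (i : Fin r)
    {a b : V} (p : G.Walk a b) :
    (boxPower G r).Reachable (Function.update f i a) (Function.update f i b) := by
  induction p with
  | nil => exact SimpleGraph.Reachable.refl _
  | @cons u v w h p ih =>
    refine (SimpleGraph.Adj.reachable ?_).trans ih
    refine ⟨i, ?_, fun j hj => ?_⟩
    · simpa using h
    · simp [Function.update_of_ne hj]

lemma bpConnected {V : Type*} (G : SimpleGraph V) (hG : G.Connected) (r : ℕ) :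
    (boxPower G r).Connected := by
  have hne : Nonempty V := hG.nonempty
  constructor
  intro f g
  classical
  have key : ∀ s : Finset (Fin r),
      (boxPower G r).Reachable f (fun j => if j ∈ s then g j else f j) := by
    intro s
    induction s using Finset.induction_on with
    | empty => simpa using SimpleGraph.Reachable.refl f
    | @insert i s hi ih =>
      refine ih.trans ?_
      set h0 : Fin r → V := fun j => if j ∈ s then g j else f j with hh0
      have h1 : (fun j => if j ∈ insert i s then g j else f j) = Function.update h0 i (g i) := by
        funext j
        by_cases hji : j = i
        · subst hji; simp [Function.update_self, hh0, hi]
        · simp [Function.update_of_ne hji, hh0, Finset.mem_insert, hji]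
      obtain ⟨p⟩ := hG.preconnected (h0 i) (g i)
      have h2 := bpReach_update G h0 i p
      rw [Function.update_eq_self] at h2
      rw [h1]
      exact h2
  have h3 := key Finset.univ
  simpa using h3

lemma bpCount {V : Type*} [Fintype V] (A : Set V) (Δ : ℕ)
    (hΔ : (Δ : ℤ) = |(A.ncard : ℤ) - ((Aᶜ : Set V).ncard : ℤ)|) (r : ℕ) :
    |(({f : Fin r → V | bpEps A f = 1}).ncard : ℤ)
      - ((({f : Fin r → V | bpEps A f = 1})ᶜ).ncard : ℤ)| = (Δ : ℤ) ^ r := by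
  classical
  have hsum : ∑ f : Fin r → V, bpEps A f = (∑ v : V, bpChi A v) ^ r :=
    (Fintype.sum_pow (bpChi A) r).symm
  have hchi : |∑ v : V, bpChi A v| = (Δ : ℤ) := by
    have h1 : ∑ v : V, bpChi A v = ((Aᶜ : Set V).ncard : ℤ) - (A.ncard : ℤ) := by
      unfold bpChi
      rw [Finset.sum_ite, Finset.sum_const, Finset.sum_const]
      have hA1 : (Finset.univ.filter (fun v => v ∈ A)).card = A.ncard := by
        rw [Set.ncard_eq_toFinset_card']; congr 1; ext v; simp
      have hA2 : (Finset.univ.filter (fun v => ¬ v ∈ A)).card = (Aᶜ : Set V).ncard := by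
        rw [Set.ncard_eq_toFinset_card']; congr 1; ext v; simp
      rw [hA1, hA2]
      ring
    rw [h1, abs_sub_comm, ← hΔ]
  set B := {f : Fin r → V | bpEps A f = 1} with hB
  have hBC : ∑ f : Fin r → V, bpEps A f = (B.ncard : ℤ) - ((Bᶜ).ncard : ℤ) := by
    rw [← Finset.sum_filter_add_sum_filter_not Finset.univ (fun f => bpEps A f = 1)]
    rw [Finset.sum_congr rfl (fun f hf => (Finset.mem_filter.mp hf).2),
        Finset.sum_congr rfl (fun f hf =>
          ((bpEps_cases A f).resolve_left (Finset.mem_filter.mp hf).2 : bpEps A f = -1))]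
    rw [Finset.sum_const, Finset.sum_const]
    have h1 : (Finset.univ.filter (fun f : Fin r → V => bpEps A f = 1)).card = B.ncard := by
      rw [Set.ncard_eq_toFinset_card']; congr 1; ext f; simp [hB]
    have h2 : (Finset.univ.filter (fun f : Fin r → V => ¬ bpEps A f = 1)).card = (Bᶜ).ncard := by
      rw [Set.ncard_eq_toFinset_card']; congr 1; ext f; simp [hB]
    rw [h1, h2]
    ring
  calc |(B.ncard : ℤ) - ((Bᶜ).ncard : ℤ)| = |∑ f : Fin r → V, bpEps A f| := by rw [hBC]
    _ = |∑ v : V, bpChi A v| ^ r := by rw [hsum, abs_pow]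
    _ = (Δ : ℤ) ^ r := by rw [hchi]

theorem boxPower_bipartite_no_hamilton_path {V : Type*} [Fintype V]
    (G : SimpleGraph V) (hG : G.Connected) (A : Set V) (hA : IsBipartitionClass G A)
    (Δ : ℕ) (hΔ : (Δ : ℤ) = |(A.ncard : ℤ) - ((Aᶜ : Set V).ncard : ℤ)|) (hΔ2 : 2 ≤ Δ)
    (r : ℕ) (hr : 1 ≤ r) :
    (boxPower G r).Connected ∧
    (∃ B : Set (Fin r → V), IsBipartitionClass (boxPower G r) B ∧
      |(B.ncard : ℤ) - ((Bᶜ : Set (Fin r → V)).ncard : ℤ)| = (Δ : ℤ) ^ r) ∧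
    (∀ (a b : Fin r → V) (P : (boxPower G r).Walk a b), P.IsPath →
      Δ ^ r - 1 ≤ {v | v ∉ P.support}.ncard) ∧
    2 ^ r - 1 ≤ Δ ^ r - 1 ∧
    ¬ ∃ (a b : Fin r → V) (P : (boxPower G r).Walk a b),
        P.IsPath ∧ ∀ v, v ∈ P.support := by
  classical
  set B := {f : Fin r → V | bpEps A f = 1} with hB
  have hbip : IsBipartitionClass (boxPower G r) B := by
    intro f g h
    have heq := bpEps_adj G A hA h
    simp only [hB, Set.mem_setOf_eq, heq]
    rcases bpEps_cases A f with h1 | h1 <;> simp [h1]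
  have hcard : |(B.ncard : ℤ) - ((Bᶜ).ncard : ℤ)| = (Δ : ℤ) ^ r := bpCount A Δ hΔ r
  have hpow1 : 1 ≤ Δ ^ r := Nat.one_le_pow _ _ (by omega)
  have hpow2 : 2 ≤ Δ ^ r := le_trans (by
    calc 2 = 2 ^ 1 := (pow_one 2).symm
    _ ≤ 2 ^ r := Nat.pow_le_pow_right (by norm_num) hr) (Nat.pow_le_pow_left hΔ2 r)
  have hpath : ∀ (a b : Fin r → V) (P : (boxPower G r).Walk a b), P.IsPath →
      Δ ^ r - 1 ≤ {v | v ∉ P.support}.ncard := by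
    intro a b P hP
    set l := P.support with hl
    have hnd : l.Nodup := hP.support_nodup
    have hchain : l.Chain' (boxPower G r).Adj := P.isChain_adj_support
    have hchain2 : (l.map (bpEps A)).Chain' (fun x y => y = -x) := by
      show List.IsChain _ _
      rw [List.isChain_map]
      exact hchain.imp (fun x y h => bpEps_adj G A hA h)
    have hsum1 : |(l.map (bpEps A)).sum| ≤ 1 :=
      bpAltSum _ (by
        intro v hv
        obtain ⟨f, hf, rfl⟩ := List.mem_map.mp hv
        exact bpEps_cases A f) hchain2
    set S := l.toFinset with hSdef
    have hS : ∑ f ∈ S, bpEps A f = (l.map (bpEps A)).sum := List.sum_toFinset _ hnd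
    set S1 := S.filter (fun f => bpEps A f = 1) with hS1
    set S2 := S.filter (fun f => ¬ bpEps A f = 1) with hS2
    have hS12 : S1.card + S2.card = S.card :=
      Finset.card_filter_add_card_filter_not _
    have hSsum : ∑ f ∈ S, bpEps A f = (S1.card : ℤ) - (S2.card : ℤ) := by
      rw [← Finset.sum_filter_add_sum_filter_not S (fun f => bpEps A f = 1)]
      rw [Finset.sum_congr rfl (fun f hf => (Finset.mem_filter.mp hf).2),
          Finset.sum_congr rfl (fun f hf =>
            ((bpEps_cases A f).resolve_left (Finset.mem_filter.mp hf).2 : bpEps A f = -1))]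
      rw [Finset.sum_const, Finset.sum_const]
      ring
    have hd : |(S1.card : ℤ) - (S2.card : ℤ)| ≤ 1 := by
      rw [← hSsum, hS]; exact hsum1
    have hsub1 : S1.card ≤ B.ncard := by
      rw [Set.ncard_eq_toFinset_card']
      apply Finset.card_le_card
      intro f hf
      simp only [hS1, Finset.mem_filter] at hf
      simp [hB, hf.2]
    have hsub2 : S2.card ≤ (Bᶜ).ncard := by
      rw [Set.ncard_eq_toFinset_card']
      apply Finset.card_le_card
      intro f hf
      simp only [hS2, Finset.mem_filter] at hf
      simp [hB, hf.2]
    have hmiss : {v | v ∉ P.support}.ncard = Fintype.card (Fin r → V) - S.card := by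
      have heq2 : {v | v ∉ P.support} = (↑(Sᶜ) : Set (Fin r → V)) := by
        ext v; simp [hSdef, hl]
      rw [heq2, Set.ncard_coe_finset, Finset.card_compl]
    have hNB : B.ncard + (Bᶜ).ncard = Fintype.card (Fin r → V) := by
      rw [← Nat.card_eq_fintype_card]; exact Set.ncard_add_ncard_compl B
    have hScard : S.card ≤ Fintype.card (Fin r → V) := Finset.card_le_univ S
    -- integer arithmetic
    have he := (abs_eq (by positivity : (0:ℤ) ≤ (Δ:ℤ) ^ r)).mp hcard
    obtain ⟨hd1, hd2⟩ := abs_le.mp hd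
    have a1 : (S1.card : ℤ) ≤ (B.ncard : ℤ) := by exact_mod_cast hsub1
    have a2 : (S2.card : ℤ) ≤ ((Bᶜ).ncard : ℤ) := by exact_mod_cast hsub2
    have a3 : (S1.card : ℤ) + (S2.card : ℤ) = (S.card : ℤ) := by exact_mod_cast hS12
    have a4 : (B.ncard : ℤ) + ((Bᶜ).ncard : ℤ) = (Fintype.card (Fin r → V) : ℤ) := by
      exact_mod_cast hNB
    have a5 : ({v | v ∉ P.support}.ncard : ℤ)
        = (Fintype.card (Fin r → V) : ℤ) - (S.card : ℤ) := by
      rw [hmiss, Nat.cast_sub hScard]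
    have hgoal : ((Δ ^ r : ℕ) : ℤ) - 1 ≤ ({v | v ∉ P.support}.ncard : ℤ) := by
      push_cast
      rcases he with he | he <;> linarith
    have hgoal2 : ((Δ ^ r - 1 : ℕ) : ℤ) ≤ ({v | v ∉ P.support}.ncard : ℤ) := by
      rw [Nat.cast_sub hpow1]
      exact_mod_cast hgoal
    exact_mod_cast hgoal2
  refine ⟨bpConnected G hG r, ⟨B, hbip, hcard⟩, hpath, ?_, ?_⟩
  · exact Nat.sub_le_sub_right (Nat.pow_le_pow_left hΔ2 r) 1
  · rintro ⟨a, b, P, hP, hall⟩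
    have h3 := hpath a b P hP
    have hempty : {v | v ∉ P.support} = ∅ := by
      ext v; simp [hall v]
    rw [hempty, Set.ncard_empty] at h3
    omega
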